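/- Under the hypotheses of the context (the absorption probabilities s_k,…,s_n of the Markov chain M_k^2), it holds that s_k ≥ 1 − (64r/((r−5)(r−1)))·(n/(n−k)²). -/

import Mathlib

private lemma sk_aux_geom (r : ℝ) (hr : 5 < r) (m0 : ℕ) :
    ∑ m ∈ Finset.range m0, (3/r:ℝ)^m ≤ r/(r-3) := by
  have hrpos : (0:ℝ) < r := by linarith
  have hr3 : (0:ℝ) < r - 3 := by linarith
  have h3r0 : (0:ℝ) ≤ 3 / r := by positivity
  have hlt : (3:ℝ)/r < 1 := by rw [div_lt_one hrpos]; linarith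
  rw [geom_sum_eq (ne_of_lt hlt)]
  have hflip : ((3/r:ℝ)^m0 - 1)/(3/r - 1) = (1 - (3/r:ℝ)^m0)/(1 - 3/r) := by
    rw [← neg_div_neg_eq]; ring_nf
  rw [hflip, div_le_div_iff₀ (by linarith) hr3]
  have h3 : r * (3/r) = 3 := by field_simp
  nlinarith [pow_nonneg h3r0 m0, hr3]

private lemma sk_aux_h1 (nn W r : ℝ) (hn0 : 0 < nn) (hr : 5 < r) (hWpos : 0 < W)
    (hWlen : W ≤ nn) :
    (r/(r-3)) * (2 / (nn * (r-1))) ≤ 32*r/((r-5)*(r-1)) * (nn/W^2) := by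
  have hrpos : (0:ℝ) < r := by linarith
  have hr1 : (0:ℝ) < r - 1 := by linarith
  have hr3 : (0:ℝ) < r - 3 := by linarith
  have hr5 : (0:ℝ) < r - 5 := by linarith
  rw [div_mul_div_comm, div_mul_div_comm,
    div_le_div_iff₀ (mul_pos hr3 (mul_pos hn0 hr1))
      (mul_pos (mul_pos hr5 hr1) (pow_pos hWpos 2))]
  have hWW : W * W ≤ nn * nn := mul_le_mul hWlen hWlen hWpos.le hn0.le
  nlinarith [mul_le_mul_of_nonneg_left hWW
      (mul_nonneg (mul_nonneg (by norm_num : (0:ℝ) ≤ 2) hrpos.le)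
        (mul_nonneg hr5.le hr1.le)),
    mul_le_mul_of_nonneg_right (by linarith : 2*(r-5) ≤ 32*(r-3))
      (mul_nonneg (mul_nonneg hrpos.le hr1.le) (by positivity : (0:ℝ) ≤ nn^2))]

private lemma sk_aux_h2 (nn W r : ℝ) (hn0 : 0 < nn) (hr : 5 < r) (hWpos : 0 < W) :
    (3 * nn^2 / (2 * r * W)) * ((3/W) * (2 / (nn * (r-1)))) ≤ 32*r/((r-5)*(r-1)) * (nn/W^2) := by
  have hrpos : (0:ℝ) < r := by linarith
  have hr1 : (0:ℝ) < r - 1 := by linarith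
  have hr5 : (0:ℝ) < r - 5 := by linarith
  have h2rW : (0:ℝ) < 2 * r * W := by nlinarith [mul_pos hrpos hWpos]
  rw [div_mul_div_comm, div_mul_div_comm, div_mul_div_comm,
    div_le_div_iff₀ (mul_pos h2rW (mul_pos hWpos (mul_pos hn0 hr1)))
      (mul_pos (mul_pos hr5 hr1) (pow_pos hWpos 2))]
  have hsc : 18*(r-5) ≤ 64*r^2 := by
    nlinarith [mul_pos hrpos hrpos, mul_lt_mul_of_pos_left hr hrpos]
  have hnn : (0:ℝ) ≤ nn^2 * ((r-1) * (W*W)) :=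
    mul_nonneg (by positivity) (mul_nonneg hr1.le (mul_nonneg hWpos.le hWpos.le))
  nlinarith [mul_le_mul_of_nonneg_right hsc hnn]

private lemma sk_aux_bern (r W : ℝ) (m0 : ℕ) (hr : 5 < r) (hm1 : 1 ≤ m0)
    (hWpos : 0 < W) (hm3' : W ≤ 2 * (m0:ℝ)) :
    ((3:ℝ)/r)^(m0-1) ≤ 3/W := by
  have hrpos : (0:ℝ) < r := by linarith
  have h3r0 : (0:ℝ) ≤ 3 / r := by positivity
  have hm1' : (1:ℝ) ≤ (m0:ℝ) := by exact_mod_cast hm1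
  have h35le : (3:ℝ)/r ≤ 3/5 := by
    apply div_le_div_of_nonneg_left (by norm_num) (by norm_num) (by linarith)
  have h35 : ((3:ℝ)/r)^(m0-1) ≤ ((3:ℝ)/5)^(m0-1) := pow_le_pow_left₀ h3r0 h35le _
  have hcast : ((m0-1:ℕ):ℝ) = (m0:ℝ) - 1 := by
    push_cast [Nat.cast_sub hm1]; ring
  have hpow : (1:ℝ) + (m0-1:ℕ) * (2/3) ≤ (1 + 2/3)^((m0-1:ℕ)) :=
    one_add_mul_le_pow (by norm_num) _
  have h53 : ((1:ℝ) + 2/3)^((m0-1:ℕ)) = ((5:ℝ)/3)^(m0-1) := by norm_num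
  have hposb : (0:ℝ) < 1 + ((m0-1:ℕ):ℝ) * (2/3) := by
    rw [hcast]; nlinarith
  have hposb' : (0:ℝ) < 1 + ((m0:ℝ) - 1) * (2/3) := by nlinarith
  have hinv : ((3:ℝ)/5)^(m0-1) ≤ 1 / (1 + ((m0-1:ℕ):ℝ) * (2/3)) := by
    rw [h53] at hpow
    have h53pos : (0:ℝ) < ((5:ℝ)/3)^(m0-1) := by positivity
    have heq3 : ((3:ℝ)/5)^(m0-1) = 1 / ((5:ℝ)/3)^(m0-1) := by
      rw [one_div, ← inv_pow]; norm_num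
    rw [heq3]
    exact one_div_le_one_div_of_le hposb hpow
  have hfin : 1 / (1 + ((m0-1:ℕ):ℝ) * (2/3)) ≤ 3/W := by
    rw [hcast, div_le_div_iff₀ hposb' hWpos]
    nlinarith [hm3']
  linarith

private lemma sk_aux_bcQ (K M nn W r : ℝ) (hr : 5 < r) (hn0 : 0 < nn) (hWpos : 0 < W)
    (hWlen : W ≤ nn) (hm3' : W ≤ 2 * M) (hM1 : 1 ≤ M) (hK : 0 ≤ K) (hKM : K + M ≤ nn) :
    (M * nn + (K + M) * (nn - (K + M))) / nn ≤ (r * M / nn) * (3 * nn^2 / (2 * r * W)) := by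
  have hrpos : (0:ℝ) < r := by linarith
  have h2rW : (0:ℝ) < 2 * r * W := by nlinarith [mul_pos hrpos hWpos]
  rw [div_mul_div_comm]
  rw [div_le_div_iff₀ hn0 (mul_pos hn0 h2rW)]
  have hsq : (K + M) * (nn - (K + M)) ≤ nn^2/4 := by
    nlinarith [sq_nonneg (nn - 2*(K + M))]
  have key : 2 * W * (M * nn + (K + M) * (nn - (K + M))) ≤ 3 * M * nn^2 := by
    nlinarith [mul_le_mul_of_nonneg_left hsq (by linarith : (0:ℝ) ≤ 2 * W),
      mul_le_mul_of_nonneg_right hWlen (by nlinarith : (0:ℝ) ≤ 2 * M * nn),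
      mul_le_mul_of_nonneg_right hm3' (by positivity : (0:ℝ) ≤ nn^2/2)]
  nlinarith [mul_le_mul_of_nonneg_right key (mul_nonneg hrpos.le hn0.le)]

set_option maxHeartbeats 1000000 in
/-- Lower bound `s_k ≥ 1 - (64r/((r-5)(r-1)))·(n/(n-k)²)` for the absorption
probabilities of the Markov chain `M_k^2`. -/
theorem sk_lower_bound (n k : ℕ) (hn : 2 ≤ n) (hk1 : 1 ≤ k) (hk2 : k ≤ n - 1)
    (r : ℝ) (hr : 5 < r) (s : ℕ → ℝ)
    (hbound : ∀ i, k ≤ i → i ≤ n + 1 → 0 ≤ s i ∧ s i ≤ 1)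
    (htop : s (n + 1) = 1)
    (hmono : ∀ i, k ≤ i → i < n → s i ≤ s (i + 1))
    (hfirst : s k ≥ (1 - 2 / ((n : ℝ) * (r - 1))) * s (k + 1))
    (hrec : ∀ i, k + 1 ≤ i → i ≤ n →
      s i = (r * i * ((n : ℝ) - i) / n * s (i + 1)
              + ((((i : ℝ) - k) * n + i * ((n : ℝ) - i)) / n) * s (i - 1)
              + r * ((i : ℝ) - k) / n)
        / (r * i * ((n : ℝ) - i) / n
              + (((i : ℝ) - k) * n + i * ((n : ℝ) - i)) / n
              + r * ((i : ℝ) - k) / n)) :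
    s k ≥ 1 - (64 * r / ((r - 5) * (r - 1))) * ((n : ℝ) / ((n : ℝ) - k) ^ 2) := by
  have hkn : k + 1 ≤ n := by omega
  have hrpos : (0:ℝ) < r := by linarith
  have hr1 : (0:ℝ) < r - 1 := by linarith
  have hr3 : (0:ℝ) < r - 3 := by linarith
  have hr5 : (0:ℝ) < r - 5 := by linarith
  have hn0 : (0:ℝ) < n := by exact_mod_cast Nat.pos_of_ne_zero (by omega)
  have hnne : (n:ℝ) ≠ 0 := ne_of_gt hn0
  have hkr : (1:ℝ) ≤ (k:ℝ) := by exact_mod_cast hk1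
  have hWn : (k:ℝ) + 1 ≤ (n:ℝ) := by exact_mod_cast hkn
  obtain ⟨W, hWdef⟩ : ∃ w : ℝ, w = (n:ℝ) - (k:ℝ) := ⟨_, rfl⟩
  rw [show ((n:ℝ) - (k:ℝ)) = W from hWdef.symm]
  have hW1 : (1:ℝ) ≤ W := by rw [hWdef]; linarith
  have hWpos : (0:ℝ) < W := by linarith
  have hWlen : W ≤ (n:ℝ) := by rw [hWdef]; linarith
  have h2rW : (0:ℝ) < 2 * r * W := by
    have := mul_pos hrpos hWpos; nlinarith
  -- the basic identity
  have ident : ∀ i : ℕ, k + 1 ≤ i → i ≤ n →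
      r * i * ((n:ℝ) - i) / n * (s (i+1) - s i) + r * ((i:ℝ) - k) / n * (1 - s i)
        = ((((i:ℝ) - k) * n + i * ((n:ℝ) - i)) / n) * (s i - s (i-1)) := by
    intro i h1 h2
    have h := hrec i h1 h2
    have hik : (k:ℝ) + 1 ≤ (i:ℝ) := by exact_mod_cast h1
    have hin : (i:ℝ) ≤ (n:ℝ) := by exact_mod_cast h2
    have hi0 : (0:ℝ) < (i:ℝ) := by linarith
    have hden : 0 < r * i * ((n:ℝ) - i) / n
        + ((((i:ℝ) - k) * n + i * ((n:ℝ) - i)) / n) + r * ((i:ℝ) - k) / n := by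
      have t1 : (0:ℝ) ≤ r * i * ((n:ℝ) - i) / n :=
        div_nonneg (mul_nonneg (mul_nonneg hrpos.le hi0.le) (by linarith)) hn0.le
      have t2 : (0:ℝ) < (((i:ℝ) - k) * n + i * ((n:ℝ) - i)) / n := by
        apply div_pos _ hn0
        nlinarith [mul_pos (by linarith : (0:ℝ) < (i:ℝ) - k) hn0,
          mul_nonneg hi0.le (by linarith : (0:ℝ) ≤ (n:ℝ) - i)]
      have t3 : (0:ℝ) < r * ((i:ℝ) - k) / n := div_pos (mul_pos hrpos (by linarith)) hn0
      linarith
    rw [eq_div_iff hden.ne'] at h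
    linear_combination -h
  -- step inequality in the first half
  have step : ∀ j : ℕ, k + 1 ≤ j → 2 * j ≤ n + k →
      s (j+1) - s j ≤ 3 / r * (s j - s (j-1)) := by
    intro j hj1 hj2
    have hjn : j + 1 ≤ n := by omega
    have hid := ident j hj1 (by omega)
    have hj0 : (0:ℝ) < (j:ℝ) := by exact_mod_cast Nat.pos_of_ne_zero (by omega)
    have hjk : (k:ℝ) + 1 ≤ (j:ℝ) := by exact_mod_cast hj1
    have hnj : (1:ℝ) ≤ (n:ℝ) - j := by
      have : ((j:ℝ) + 1) ≤ (n:ℝ) := by exact_mod_cast hjn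
      linarith
    have h2j : (j:ℝ) - k ≤ (n:ℝ) - j := by
      have : ((2*j:ℕ):ℝ) ≤ ((n + k:ℕ):ℝ) := by exact_mod_cast hj2
      push_cast at this; linarith
    have ha : 0 < r * j * ((n:ℝ) - j) / n :=
      div_pos (mul_pos (mul_pos hrpos hj0) (by linarith)) hn0
    have hd0 : 0 ≤ s j - s (j-1) := by
      have hj1' : j - 1 + 1 = j := by omega
      have := hmono (j-1) (by omega) (by omega)
      rw [hj1'] at this; linarith
    have hsj : s j ≤ 1 := (hbound j (by omega) (by omega)).2
    have hba : (((j:ℝ) - k) * n + j * ((n:ℝ) - j)) / n ≤ 3 / r * (r * j * ((n:ℝ) - j) / n) := by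
      have key : ((j:ℝ) - k) * n + j * ((n:ℝ) - j) ≤ 3 * ((j:ℝ) * ((n:ℝ) - j)) := by
        nlinarith [mul_le_mul_of_nonneg_right h2j hj0.le,
          mul_le_mul_of_nonneg_right (by linarith : (j:ℝ) - k ≤ (j:ℝ)) (by linarith : (0:ℝ) ≤ (n:ℝ) - j)]
      have heq : 3 / r * (r * j * ((n:ℝ) - j) / n) = 3 * ((j:ℝ) * ((n:ℝ) - j)) / n := by
        field_simp
      rw [heq]
      gcongr
    have hc : 0 ≤ r * ((j:ℝ) - k)/n * (1 - s j) :=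
      mul_nonneg (div_nonneg (mul_nonneg hrpos.le (by linarith)) hn0.le) (by linarith)
    have had : r * j * ((n:ℝ) - j) / n * (s (j+1) - s j)
        ≤ (((j:ℝ) - k) * n + j * ((n:ℝ) - j)) / n * (s j - s (j-1)) := by linarith
    have h5 : r * j * ((n:ℝ) - j) / n * (s (j+1) - s j)
        ≤ r * j * ((n:ℝ) - j) / n * (3 / r * (s j - s (j-1))) := by
      calc r * j * ((n:ℝ) - j) / n * (s (j+1) - s j)
          ≤ (((j:ℝ) - k) * n + j * ((n:ℝ) - j)) / n * (s j - s (j-1)) := had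
        _ ≤ 3 / r * (r * j * ((n:ℝ) - j) / n) * (s j - s (j-1)) :=
            mul_le_mul_of_nonneg_right hba hd0
        _ = r * j * ((n:ℝ) - j) / n * (3 / r * (s j - s (j-1))) := by ring
    exact le_of_mul_le_mul_left h5 ha
  have hD0 : 0 ≤ s (k+1) - s k := by
    have := hmono k le_rfl (by omega); linarith
  have h3r0 : (0:ℝ) ≤ 3 / r := by positivity
  have h3r1 : 3 / r ≤ 1 := by rw [div_le_one hrpos]; linarith
  obtain ⟨m0, hm0def⟩ : ∃ m : ℕ, m = (n - k + 1) / 2 := ⟨_, rfl⟩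
  have hm1 : 1 ≤ m0 := by omega
  have hm2 : 2 * m0 ≤ n - k + 1 := by omega
  have hm3 : n - k ≤ 2 * m0 := by omega
  have hiN : k + m0 ≤ n := by omega
  clear hm0def
  have hm3' : W ≤ 2 * (m0:ℝ) := by
    rw [hWdef]
    have : ((n - k:ℕ):ℝ) ≤ ((2*m0:ℕ):ℝ) := by exact_mod_cast hm3
    push_cast [Nat.cast_sub (by omega : k ≤ n)] at this
    linarith
  have hm1' : (1:ℝ) ≤ (m0:ℝ) := by exact_mod_cast hm1
  have decay : ∀ m : ℕ, m + 1 ≤ m0 →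
      s (k+m+1) - s (k+m) ≤ (3/r)^m * (s (k+1) - s k) := by
    intro m
    induction m with
    | zero => intro _; simp
    | succ p ih =>
      intro h
      have hp := ih (by omega)
      have hst := step (k+p+1) (by omega) (by omega)
      have heq : k + p + 1 - 1 = k + p := by omega
      rw [heq] at hst
      have e1 : k + (p+1) = k + p + 1 := rfl
      calc s (k+(p+1)+1) - s (k+(p+1)) = s ((k+p+1)+1) - s (k+p+1) := by rw [e1]
        _ ≤ 3/r * (s (k+p+1) - s (k+p)) := hst
        _ ≤ 3/r * ((3/r)^p * (s (k+1) - s k)) := mul_le_mul_of_nonneg_left hp h3r0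
        _ = (3/r)^(p+1) * (s (k+1) - s k) := by ring
  have tele : s (k + m0) - s k = ∑ m ∈ Finset.range m0, (s (k+m+1) - s (k+m)) := by
    have := Finset.sum_range_sub (fun m => s (k+m)) m0
    simpa [← Nat.add_assoc] using this.symm
  have hgeom : ∑ m ∈ Finset.range m0, (3/r:ℝ)^m ≤ r/(r-3) := sk_aux_geom r hr m0
  have hsum : s (k + m0) - s k ≤ (r/(r-3)) * (s (k+1) - s k) := by
    rw [tele]
    calc ∑ m ∈ Finset.range m0, (s (k+m+1) - s (k+m))
        ≤ ∑ m ∈ Finset.range m0, (3/r:ℝ)^m * (s (k+1) - s k) :=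
          Finset.sum_le_sum (fun m hm => decay m (Finset.mem_range.mp hm))
      _ = (∑ m ∈ Finset.range m0, (3/r:ℝ)^m) * (s (k+1) - s k) := by
          rw [Finset.sum_mul]
      _ ≤ (r/(r-3)) * (s (k+1) - s k) := mul_le_mul_of_nonneg_right hgeom hD0
  -- bound on D
  have hs1 : s (k+1) ≤ 1 := (hbound (k+1) (by omega) (by omega)).2
  have he0 : (0:ℝ) ≤ 2 / ((n:ℝ) * (r-1)) := by positivity
  have hD : s (k+1) - s k ≤ 2 / ((n:ℝ) * (r-1)) := by
    nlinarith [hfirst, mul_le_mul_of_nonneg_left hs1 he0]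
  -- midpoint bound
  have hidm := ident (k+m0) (by omega) hiN
  have hup : s (k+m0) ≤ s (k+m0+1) := by
    by_cases hc : k + m0 < n
    · exact hmono _ (by omega) hc
    · have he : k + m0 = n := by omega
      rw [he, htop]
      exact (hbound n (by omega) (by omega)).2
  have hcastm : ((k+m0:ℕ):ℝ) = (k:ℝ) + (m0:ℝ) := by push_cast; ring
  rw [hcastm] at hidm
  have hmk : (k:ℝ) + (m0:ℝ) - k = (m0:ℝ) := by ring
  have hi_le : (k:ℝ) + (m0:ℝ) ≤ (n:ℝ) := by
    have : ((k+m0:ℕ):ℝ) ≤ (n:ℝ) := by exact_mod_cast hiN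
    rw [hcastm] at this; exact this
  have ha0 : (0:ℝ) ≤ r * ((k:ℝ)+(m0:ℝ)) * ((n:ℝ) - ((k:ℝ)+(m0:ℝ))) / n :=
    div_nonneg (mul_nonneg (mul_nonneg hrpos.le (by linarith)) (by linarith)) hn0.le
  have hcpos : (0:ℝ) < r * (((k:ℝ)+(m0:ℝ)) - k) / n :=
    div_pos (mul_pos hrpos (by rw [hmk]; linarith)) hn0
  have hb0 : (0:ℝ) ≤ ((((k:ℝ)+(m0:ℝ)) - k) * n + ((k:ℝ)+(m0:ℝ)) * ((n:ℝ) - ((k:ℝ)+(m0:ℝ)))) / n := by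
    apply div_nonneg _ hn0.le
    rw [hmk]
    nlinarith [mul_nonneg (by linarith : (0:ℝ) ≤ (k:ℝ)+(m0:ℝ)) (by linarith : (0:ℝ) ≤ (n:ℝ) - ((k:ℝ)+(m0:ℝ)))]
  -- from the identity: c (1 - s i*) ≤ b (s i* - s (i*-1))
  have hcb : r * (((k:ℝ)+(m0:ℝ)) - k) / n * (1 - s (k+m0))
      ≤ ((((k:ℝ)+(m0:ℝ)) - k) * n + ((k:ℝ)+(m0:ℝ)) * ((n:ℝ) - ((k:ℝ)+(m0:ℝ)))) / n
        * (s (k+m0) - s (k+m0-1)) := by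
    have haterm : (0:ℝ) ≤ r * ((k:ℝ)+(m0:ℝ)) * ((n:ℝ) - ((k:ℝ)+(m0:ℝ))) / n * (s (k+m0+1) - s (k+m0)) :=
      mul_nonneg ha0 (by linarith)
    linarith [hidm]
  -- decay at i*-1
  have hdecm := decay (m0-1) (by omega)
  have e2 : k + (m0-1) + 1 = k + m0 := by omega
  have e3 : k + (m0-1) = k + m0 - 1 := by omega
  rw [e2, e3] at hdecm
  -- b ≤ c * Q with Q = 3n²/(2rW)
  have hQ0 : (0:ℝ) ≤ 3 * (n:ℝ)^2 / (2 * r * W) :=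
    div_nonneg (by positivity) h2rW.le
  have hbcQ : ((((k:ℝ)+(m0:ℝ)) - k) * n + ((k:ℝ)+(m0:ℝ)) * ((n:ℝ) - ((k:ℝ)+(m0:ℝ)))) / n
      ≤ (r * (((k:ℝ)+(m0:ℝ)) - k) / n) * (3 * (n:ℝ)^2 / (2 * r * W)) := by
    rw [hmk]
    exact sk_aux_bcQ (k:ℝ) (m0:ℝ) (n:ℝ) W r hr hn0 hWpos hWlen hm3' hm1'
      (by linarith) hi_le
  -- 1 - s i* ≤ Q * ((3/r)^(m0-1) * D)
  have hmid : 1 - s (k+m0) ≤ (3 * (n:ℝ)^2 / (2 * r * W)) * ((3/r)^(m0-1) * (s (k+1) - s k)) := by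
    have hdm0 : 0 ≤ s (k+m0) - s (k+m0-1) := by
      have hj1' : k + m0 - 1 + 1 = k + m0 := by omega
      have := hmono (k+m0-1) (by omega) (by omega)
      rw [hj1'] at this; linarith
    have hX0 : (0:ℝ) ≤ (3/r)^(m0-1) * (s (k+1) - s k) := mul_nonneg (pow_nonneg h3r0 _) hD0
    have c1 : r * (((k:ℝ)+(m0:ℝ)) - k) / n * (1 - s (k+m0))
        ≤ (r * (((k:ℝ)+(m0:ℝ)) - k) / n) * ((3 * (n:ℝ)^2 / (2 * r * W)) * ((3/r)^(m0-1) * (s (k+1) - s k))) := by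
      calc r * (((k:ℝ)+(m0:ℝ)) - k) / n * (1 - s (k+m0))
          ≤ ((((k:ℝ)+(m0:ℝ)) - k) * n + ((k:ℝ)+(m0:ℝ)) * ((n:ℝ) - ((k:ℝ)+(m0:ℝ)))) / n
            * (s (k+m0) - s (k+m0-1)) := hcb
        _ ≤ ((((k:ℝ)+(m0:ℝ)) - k) * n + ((k:ℝ)+(m0:ℝ)) * ((n:ℝ) - ((k:ℝ)+(m0:ℝ)))) / n
            * ((3/r)^(m0-1) * (s (k+1) - s k)) := mul_le_mul_of_nonneg_left hdecm hb0
        _ ≤ (r * (((k:ℝ)+(m0:ℝ)) - k) / n) * (3 * (n:ℝ)^2 / (2 * r * W))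
            * ((3/r)^(m0-1) * (s (k+1) - s k)) := mul_le_mul_of_nonneg_right hbcQ hX0
        _ = (r * (((k:ℝ)+(m0:ℝ)) - k) / n) * ((3 * (n:ℝ)^2 / (2 * r * W)) * ((3/r)^(m0-1) * (s (k+1) - s k))) := by ring
    exact le_of_mul_le_mul_left c1 hcpos
  -- Bernoulli-type bound
  have hbern : ((3:ℝ)/r)^(m0-1) ≤ 3/W := sk_aux_bern r W m0 hr hm1 hWpos hm3'
  -- final assembly
  have hfrac1 : s (k+m0) - s k ≤ (r/(r-3)) * (2 / ((n:ℝ) * (r-1))) := by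
    calc s (k+m0) - s k ≤ (r/(r-3)) * (s (k+1) - s k) := hsum
      _ ≤ (r/(r-3)) * (2 / ((n:ℝ) * (r-1))) :=
        mul_le_mul_of_nonneg_left hD (le_of_lt (div_pos hrpos hr3))
  have hfrac2 : 1 - s (k+m0) ≤ (3 * (n:ℝ)^2 / (2 * r * W)) * ((3/W) * (2 / ((n:ℝ) * (r-1)))) := by
    calc 1 - s (k+m0) ≤ (3 * (n:ℝ)^2 / (2 * r * W)) * ((3/r)^(m0-1) * (s (k+1) - s k)) := hmid
      _ ≤ (3 * (n:ℝ)^2 / (2 * r * W)) * ((3/W) * (s (k+1) - s k)) := by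
          apply mul_le_mul_of_nonneg_left _ hQ0
          exact mul_le_mul_of_nonneg_right hbern hD0
      _ ≤ (3 * (n:ℝ)^2 / (2 * r * W)) * ((3/W) * (2 / ((n:ℝ) * (r-1)))) := by
          apply mul_le_mul_of_nonneg_left _ hQ0
          exact mul_le_mul_of_nonneg_left hD (div_nonneg (by norm_num) hWpos.le)
  clear hrec ident step decay tele hgeom hsum hmono hbound hcb hidm hbcQ hmid hbern
    hdecm hup hD hfirst htop hs1 hQ0 hmk hi_le ha0 hcpos hb0 hcastm
  have h1 : (r/(r-3)) * (2 / ((n:ℝ) * (r-1))) ≤ 32*r/((r-5)*(r-1)) * ((n:ℝ)/W^2) :=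
    sk_aux_h1 (n:ℝ) W r hn0 hr hWpos hWlen
  have h2 : (3 * (n:ℝ)^2 / (2 * r * W)) * ((3/W) * (2 / ((n:ℝ) * (r-1)))) ≤ 32*r/((r-5)*(r-1)) * ((n:ℝ)/W^2) :=
    sk_aux_h2 (n:ℝ) W r hn0 hr hWpos
  have hsplit : 1 - s k = (1 - s (k+m0)) + (s (k+m0) - s k) := by ring
  have h64 : 32*r/((r-5)*(r-1)) * ((n:ℝ)/W^2) + 32*r/((r-5)*(r-1)) * ((n:ℝ)/W^2)
      = 64 * r / ((r - 5) * (r - 1)) * ((n:ℝ) / W ^ 2) := by ring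
  linarith [hfrac1, hfrac2, h1, h2]
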